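/- For every natural number m ≥ 1 and every real x with 0 < x < 1, one has 0 < sin(πx) − Q_m(x) < (π^{2m+2} (x(1 − x))^{m+1} / (2m+2)!) · 1/(1 − q_m), where q_m := (π²/4)/((2m+4)(2m+3)). -/

import Mathlib

open Real

/-- The summand `a_{j,k} = (-π²/4)^k / (2j+2k)! · C(j+k, j)`. -/
noncomputable def a (j k : ℕ) : ℝ :=
  (-(π ^ 2) / 4) ^ k / (Nat.factorial (2 * j + 2 * k)) * (Nat.choose (j + k) j)

/-- `t_j = Σ_{k=0}^∞ a_{j,k}`. -/
noncomputable def t (j : ℕ) : ℝ := ∑' k : ℕ, a j k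

/-- `Q_m(x) = Σ_{j=1}^m t_j π^{2j} (x(1 − x))^j`. -/
noncomputable def Q (m : ℕ) (x : ℝ) : ℝ :=
  ∑ j ∈ Finset.Icc 1 m, t j * π ^ (2 * j) * (x * (1 - x)) ^ j

noncomputable def cc (j k : ℕ) : ℝ :=
  (Nat.choose (j + k) j : ℝ) / (Nat.factorial (2 * j + 2 * k))

lemma cc_pos (j k : ℕ) : 0 < cc j k := by
  apply div_pos
  · exact_mod_cast Nat.choose_pos (Nat.le_add_right j k)
  · exact_mod_cast Nat.factorial_pos _

lemma a_eq (j k : ℕ) : a j k = (-(π ^ 2 / 4)) ^ k * cc j k := by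
  unfold a cc
  rw [neg_div]
  ring

lemma pisq_lt : (π : ℝ) ^ 2 < 10 := by nlinarith [Real.pi_lt_d2, Real.pi_gt_three]

lemma choose_identity (j k : ℕ) :
    (k + 1) * Nat.choose (j + k + 1) j = (j + k + 1) * Nat.choose (j + k) j := by
  have h1 : (j + k).choose k = (j + k).choose j := by
    have := Nat.choose_symm (Nat.le_add_right j k)
    simpa using this
  have h2 : (j + k + 1).choose (k + 1) = (j + k + 1).choose j := by
    have := Nat.choose_symm (n := j + k + 1) (k := j) (by omega)
    have h3 : j + k + 1 - j = k + 1 := by omega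
    rw [h3] at this
    exact this
  have h := Nat.add_one_mul_choose_eq (j + k) k
  rw [h1, h2] at h
  rw [mul_comm]
  exact h.symm

lemma ratio_lt (j k : ℕ) (h3 : 3 ≤ (k + 1) * (2 * j + 2 * k + 1)) :
    π ^ 2 / 4 * cc j (k + 1) < cc j k := by
  have hC : ((k : ℝ) + 1) * (Nat.choose (j + k + 1) j : ℝ)
      = ((j : ℝ) + k + 1) * (Nat.choose (j + k) j : ℝ) := by
    exact_mod_cast congrArg (Nat.cast (R := ℝ)) (choose_identity j k)
  have hF2 : (Nat.factorial (2 * j + 2 * (k + 1)) : ℝ)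
      = (2 * (j : ℝ) + 2 * k + 2) * (2 * (j : ℝ) + 2 * k + 1) * (Nat.factorial (2 * j + 2 * k)) := by
    have h : 2 * j + 2 * (k + 1) = (2 * j + 2 * k + 1) + 1 := by ring
    rw [h, Nat.factorial_succ, Nat.factorial_succ]
    push_cast
    ring
  have hidx : j + (k + 1) = j + k + 1 := by omega
  unfold cc
  rw [hidx, hF2]
  set C0 : ℝ := (Nat.choose (j + k) j : ℝ) with hC0def
  set C1 : ℝ := (Nat.choose (j + k + 1) j : ℝ) with hC1def
  set F0 : ℝ := (Nat.factorial (2 * j + 2 * k) : ℝ) with hF0def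
  have hF0 : (0 : ℝ) < F0 := by rw [hF0def]; exact_mod_cast Nat.factorial_pos _
  have hC0 : (0 : ℝ) < C0 := by
    rw [hC0def]; exact_mod_cast Nat.choose_pos (Nat.le_add_right j k)
  have h3R : (3 : ℝ) ≤ ((k : ℝ) + 1) * (2 * j + 2 * k + 1) := by exact_mod_cast h3
  have hpi := pisq_lt
  have hK : (0 : ℝ) < (k : ℝ) + 1 := by positivity
  have hJ : (0 : ℝ) < (j : ℝ) + k + 1 := by positivity
  rw [div_mul_div_comm, div_lt_div_iff₀ (by positivity) hF0]
  rw [← mul_lt_mul_iff_right₀ hK]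
  have lhs_eq : ((k : ℝ) + 1) * (π ^ 2 * C1 * F0) = π ^ 2 * (((j : ℝ) + k + 1) * C0 * F0) := by
    linear_combination (π ^ 2 * F0) * hC
  rw [lhs_eq]
  have hX : (0 : ℝ) < ((j : ℝ) + k + 1) * C0 * F0 := by positivity
  calc π ^ 2 * (((j : ℝ) + k + 1) * C0 * F0)
      < 10 * (((j : ℝ) + k + 1) * C0 * F0) := by
        exact mul_lt_mul_of_pos_right hpi hX
    _ ≤ 8 * (((k : ℝ) + 1) * (2 * j + 2 * k + 1)) * (((j : ℝ) + k + 1) * C0 * F0) := by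
        have h24 : (10 : ℝ) ≤ 8 * (((k : ℝ) + 1) * (2 * j + 2 * k + 1)) := by linarith
        exact mul_le_mul_of_nonneg_right h24 hX.le
    _ = ((k : ℝ) + 1) * (C0 * (4 * ((2 * (j : ℝ) + 2 * k + 2) * (2 * (j : ℝ) + 2 * k + 1) * F0))) := by
        ring
lemma pi4_pos : (0:ℝ) < π ^ 2 / 4 := by positivity

lemma pair_pos (j i : ℕ) (hj : 1 ≤ j) : 0 < a j (2 * i) + a j (2 * i + 1) := by
  have hr := ratio_lt j (2 * i) (by nlinarith)
  rw [a_eq, a_eq]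
  rw [Even.neg_pow (even_two_mul i), Odd.neg_pow ⟨i, by ring⟩]
  have hpow : (0:ℝ) < (π ^ 2 / 4) ^ (2 * i) := pow_pos pi4_pos _
  have h1 : (π ^ 2 / 4) ^ (2 * i + 1) = (π ^ 2 / 4) ^ (2 * i) * (π ^ 2 / 4) := pow_succ _ _
  rw [h1]
  have := cc_pos j (2 * i)
  nlinarith [hr, hpow]

lemma pair_neg (j i : ℕ) (hj : 1 ≤ j) : a j (2 * i + 1) + a j (2 * i + 2) < 0 := by
  have hr := ratio_lt j (2 * i + 1) (by nlinarith)
  rw [a_eq, a_eq]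
  rw [Odd.neg_pow ⟨i, by ring⟩, Even.neg_pow ⟨i + 1, by ring⟩]
  have hpow : (0:ℝ) < (π ^ 2 / 4) ^ (2 * i + 1) := pow_pos pi4_pos _
  have h1 : (π ^ 2 / 4) ^ (2 * i + 2) = (π ^ 2 / 4) ^ (2 * i + 1) * (π ^ 2 / 4) := by
    rw [← pow_succ]
  rw [h1]
  simp only [show 2 * i + 1 + 1 = 2 * i + 2 from rfl] at hr
  have := cc_pos j (2 * i + 1)
  nlinarith [hr, hpow]

lemma cc_le (j k : ℕ) : cc j k ≤ 1 / (Nat.factorial k) := by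
  unfold cc
  rw [div_le_div_iff₀ (by exact_mod_cast Nat.factorial_pos _) (by exact_mod_cast Nat.factorial_pos _)]
  have hnat : Nat.choose (j + k) j * Nat.factorial k ≤ Nat.factorial (2 * j + 2 * k) := by
    have h := Nat.choose_mul_factorial_mul_factorial (Nat.le_add_right j k)
    have h2 : j + k - j = k := by omega
    rw [h2] at h
    calc Nat.choose (j + k) j * Nat.factorial k
        ≤ Nat.choose (j + k) j * Nat.factorial j * Nat.factorial k := by
          have := Nat.one_le_iff_ne_zero.mpr (Nat.factorial_ne_zero j)
          nlinarith [Nat.zero_le (Nat.choose (j + k) j * Nat.factorial k)]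
      _ = Nat.factorial (j + k) := h
      _ ≤ Nat.factorial (2 * j + 2 * k) := Nat.factorial_le (by omega)
  calc (Nat.choose (j + k) j : ℝ) * Nat.factorial k
      ≤ (Nat.factorial (2 * j + 2 * k) : ℝ) := by exact_mod_cast hnat
    _ = 1 * (Nat.factorial (2 * j + 2 * k) : ℝ) := by ring

lemma abs_a_le (j k : ℕ) : |a j k| ≤ (π ^ 2 / 4) ^ k / Nat.factorial k := by
  rw [a_eq, abs_mul, abs_pow, abs_neg, abs_of_pos pi4_pos, abs_of_pos (cc_pos j k)]
  calc (π ^ 2 / 4) ^ k * cc j k ≤ (π ^ 2 / 4) ^ k * (1 / Nat.factorial k) :=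
        mul_le_mul_of_nonneg_left (cc_le j k) (by positivity)
    _ = (π ^ 2 / 4) ^ k / Nat.factorial k := by ring

lemma summable_a (j : ℕ) : Summable (a j) := by
  apply Summable.of_abs
  exact Summable.of_nonneg_of_le (fun k => abs_nonneg _) (abs_a_le j)
    (Real.summable_pow_div_factorial (π ^ 2 / 4))

lemma tsum_pos_pairs {f : ℕ → ℝ} (hf : Summable f) (h : ∀ i, 0 < f (2 * i) + f (2 * i + 1)) :
    0 < ∑' k, f k := by
  have he : Summable (fun i => f (2 * i)) :=
    hf.comp_injective (fun x y hxy => by omega)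
  have ho : Summable (fun i => f (2 * i + 1)) :=
    hf.comp_injective (fun x y hxy => by omega)
  rw [← tsum_even_add_odd he ho, ← Summable.tsum_add he ho]
  exact Summable.tsum_pos (he.add ho) (fun i => (h i).le) 0 (h 0)

lemma t_pos (j : ℕ) (hj : 1 ≤ j) : 0 < t j :=
  tsum_pos_pairs (summable_a j) (fun i => pair_pos j i hj)

lemma a_zero (j : ℕ) : a j 0 = 1 / Nat.factorial (2 * j) := by
  unfold a
  simp

lemma t_lt (j : ℕ) (hj : 1 ≤ j) : t j < 1 / Nat.factorial (2 * j) := by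
  have hs : Summable (fun k => a j (k + 1)) :=
    (summable_a j).comp_injective (fun x y hxy => by omega)
  have h := Summable.tsum_eq_zero_add (summable_a j)
  have hneg : 0 < ∑' k, -a j (k + 1) := by
    apply tsum_pos_pairs hs.neg
    intro i
    have := pair_neg j i hj
    have h2 : 2 * i + 1 + 1 = 2 * i + 2 := rfl
    simp only [h2]
    linarith
  rw [tsum_neg] at hneg
  unfold t
  rw [h, a_zero]
  linarith

lemma t_zero : t 0 = 0 := by
  have h : ∀ k, a 0 k = (-1) ^ k * (π / 2) ^ (2 * k) / Nat.factorial (2 * k) := by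
    intro k
    unfold a
    rw [show (0 + k).choose 0 = 1 from Nat.choose_zero_right _,
      show 2 * 0 + 2 * k = 2 * k from by omega]
    have h1 : (-(π ^ 2) / 4 : ℝ) = (-1) * (π / 2) ^ 2 := by ring
    rw [h1, mul_pow, ← pow_mul]
    push_cast
    ring
  unfold t
  rw [tsum_congr h, ← Real.cos_eq_tsum (π / 2), Real.cos_pi_div_two]

lemma t_nonneg (j : ℕ) : 0 ≤ t j := by
  cases j with
  | zero => rw [t_zero]
  | succ n => exact (t_pos (n + 1) (Nat.succ_le_succ (Nat.zero_le n))).le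

lemma t_le (j : ℕ) : t j ≤ 1 / Nat.factorial (2 * j) := by
  cases j with
  | zero => rw [t_zero]; positivity
  | succ n => exact (t_lt (n + 1) (Nat.succ_le_succ (Nat.zero_le n))).le
lemma sin_eq (x : ℝ) (h0 : 0 ≤ x) (h1 : x ≤ 1) :
    Real.sin (π * x) = ∑' j : ℕ, t j * π ^ (2 * j) * (x * (1 - x)) ^ j := by
  set y := x * (1 - x) with hy
  have hy0 : 0 ≤ y := by nlinarith
  have hy4 : y ≤ 1 / 4 := by nlinarith [sq_nonneg (x - 1 / 2)]
  set g : ℕ → ℕ → ℝ := fun n jj =>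
    π ^ (2 * n) / Nat.factorial (2 * n) * (Nat.choose n jj) * y ^ jj * (-(1 / 4) : ℝ) ^ (n - jj)
    with hg
  have habs : ∀ n jj, |g n jj|
      = π ^ (2 * n) / Nat.factorial (2 * n) * (Nat.choose n jj) * y ^ jj * ((1 / 4) : ℝ) ^ (n - jj) := by
    intro n jj
    rw [hg]
    simp only []
    rw [abs_mul, abs_mul, abs_mul, abs_pow, abs_pow, abs_neg]
    rw [abs_of_nonneg (by positivity : (0:ℝ) ≤ π ^ (2 * n) / Nat.factorial (2 * n)),
      abs_of_nonneg (by positivity : (0:ℝ) ≤ (Nat.choose n jj : ℝ)),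
      abs_of_nonneg hy0, abs_of_nonneg (by norm_num : (0:ℝ) ≤ (1:ℝ)/4)]
  have hrow_fin : ∀ n, ∀ jj ∉ Finset.range (n + 1), g n jj = 0 := by
    intro n jj hjj
    rw [hg]
    simp only []
    rw [Nat.choose_eq_zero_of_lt (by simpa using hjj)]
    simp
  have habs_row_fin : ∀ n, ∀ jj ∉ Finset.range (n + 1), |g n jj| = 0 := by
    intro n jj hjj
    rw [hrow_fin n jj hjj, abs_zero]
  have hrow_sum : ∀ n, ∑' jj, |g n jj|
      = π ^ (2 * n) / Nat.factorial (2 * n) * (y + 1 / 4) ^ n := by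
    intro n
    rw [tsum_eq_sum (habs_row_fin n), add_pow y (1/4) n, Finset.mul_sum]
    apply Finset.sum_congr rfl
    intro jj _
    rw [habs]
    ring
  have hGsum : Summable (fun p : ℕ × ℕ => |g p.1 p.2|) := by
    rw [summable_prod_of_nonneg (fun p => abs_nonneg _)]
    constructor
    · intro n
      exact summable_of_ne_finset_zero (habs_row_fin n)
    · apply Summable.of_nonneg_of_le (fun n => tsum_nonneg (fun jj => abs_nonneg _))
        (fun n => ?_) (Real.summable_pow_div_factorial (π ^ 2 / 2))
      rw [hrow_sum n]
      have hb : π ^ (2 * n) * (y + 1 / 4) ^ n ≤ (π ^ 2 / 2) ^ n := by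
        rw [pow_mul, ← mul_pow]
        apply pow_le_pow_left₀ (by positivity)
        nlinarith [sq_nonneg π]
      have hf : (1 : ℝ) / Nat.factorial (2 * n) ≤ 1 / Nat.factorial n := by
        apply one_div_le_one_div_of_le (by exact_mod_cast Nat.factorial_pos n)
        exact_mod_cast Nat.factorial_le (by omega)
      calc π ^ (2 * n) / Nat.factorial (2 * n) * (y + 1 / 4) ^ n
          = π ^ (2 * n) * (y + 1 / 4) ^ n * (1 / Nat.factorial (2 * n)) := by ring
        _ ≤ (π ^ 2 / 2) ^ n * (1 / Nat.factorial n) := by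
            apply mul_le_mul hb hf (by positivity) (by positivity)
        _ = (π ^ 2 / 2) ^ n / Nat.factorial n := by ring
  have hguncurry : Summable (Function.uncurry g) := by
    apply Summable.of_abs
    exact hGsum
  have hcomm := Summable.tsum_comm (f := g) hguncurry
  have hdiag : ∀ n, ∑' jj, g n jj = (-1) ^ n * (π * (x - 1 / 2)) ^ (2 * n) / Nat.factorial (2 * n) := by
    intro n
    rw [tsum_eq_sum (hrow_fin n)]
    have hsum : ∑ jj ∈ Finset.range (n + 1), g n jj
        = π ^ (2 * n) / Nat.factorial (2 * n) * (y + (-(1/4))) ^ n := by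
      rw [add_pow y (-(1/4)) n, Finset.mul_sum]
      apply Finset.sum_congr rfl
      intro jj _
      rw [hg]
      ring
    rw [hsum]
    have h14 : y + (-(1/4)) = -((x - 1/2) ^ 2) := by rw [hy]; ring
    rw [h14, neg_pow, ← pow_mul, mul_pow]
    ring
  have hcol : ∀ jj, ∑' n, g n jj = t jj * π ^ (2 * jj) * y ^ jj := by
    intro jj
    have hinj : Function.Injective (fun k : ℕ => jj + k) := fun p q h => by
      simpa using h
    have hsupp : Function.support (fun n => g n jj) ⊆ Set.range (fun k : ℕ => jj + k) := by
      intro n hn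
      rcases le_or_gt jj n with h | h
      · exact ⟨n - jj, by show jj + (n - jj) = n; omega⟩
      · exfalso
        apply hn
        rw [hg]
        simp only []
        rw [Nat.choose_eq_zero_of_lt h]
        simp
    rw [← Function.Injective.tsum_eq hinj hsupp]
    have hterm : ∀ k, g (jj + k) jj = a jj k * (π ^ (2 * jj) * y ^ jj) := by
      intro k
      rw [hg]
      simp only []
      rw [show jj + k - jj = k from by omega]
      unfold a
      rw [show 2 * (jj + k) = 2 * jj + 2 * k from by ring]
      have hb : (π ^ 2 : ℝ) * (-(1/4)) = -(π ^ 2) / 4 := by ring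
      have h3 : (π : ℝ) ^ (2 * jj + 2 * k) * (-(1/4) : ℝ) ^ k
          = π ^ (2 * jj) * (-(π ^ 2) / 4) ^ k := by
        rw [pow_add, pow_mul, pow_mul, mul_assoc, ← mul_pow, hb]
      linear_combination
        ((Nat.choose (jj + k) jj : ℝ) * y ^ jj / (Nat.factorial (2 * jj + 2 * k) : ℝ)) * h3
    rw [tsum_congr hterm, tsum_mul_right]
    unfold t
    ring
  calc Real.sin (π * x)
      = Real.cos (π * (x - 1/2)) := by
        rw [show π * (x - 1/2) = -(π/2 - π * x) from by ring, Real.cos_neg,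
          Real.cos_pi_div_two_sub]
    _ = ∑' n, (-1)^n * (π*(x-1/2))^(2*n) / Nat.factorial (2*n) := Real.cos_eq_tsum _
    _ = ∑' n, ∑' jj, g n jj := (tsum_congr hdiag).symm
    _ = ∑' jj, ∑' n, g n jj := hcomm.symm
    _ = ∑' jj, t jj * π ^ (2 * jj) * y ^ jj := tsum_congr hcol
lemma fact_aux (m : ℕ) : ∀ i : ℕ,
    Nat.factorial (2*m+2) * ((2*m+3)*(2*m+4))^i ≤ Nat.factorial (2*(i+m+1))
  | 0 => by
      rw [show 2*(0+m+1) = 2*m+2 from by ring]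
      simp
  | (i+1) => by
      have ih := fact_aux m i
      rw [show 2*((i+1)+m+1) = (2*(i+m+1)+1)+1 from by ring, Nat.factorial_succ,
        Nat.factorial_succ]
      calc Nat.factorial (2*m+2) * ((2*m+3)*(2*m+4))^(i+1)
          = ((2*m+3)*(2*m+4)) * (Nat.factorial (2*m+2) * ((2*m+3)*(2*m+4))^i) := by ring
        _ ≤ ((2*m+3)*(2*m+4)) * Nat.factorial (2*(i+m+1)) := Nat.mul_le_mul_left _ ih
        _ ≤ ((2*(i+m+1)+1) * (2*(i+m+1)+1+1)) * Nat.factorial (2*(i+m+1)) :=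
            Nat.mul_le_mul_right _ (Nat.mul_le_mul (by omega) (by omega))
        _ = (2*(i+m+1)+1+1) * ((2*(i+m+1)+1) * Nat.factorial (2*(i+m+1))) := by ring

lemma summable_u (x : ℝ) (h0 : 0 ≤ x) (h1 : x ≤ 1) :
    Summable (fun j : ℕ => t j * π ^ (2*j) * (x*(1-x))^j) := by
  have hy0 : 0 ≤ x*(1-x) := by nlinarith
  have hy4 : x*(1-x) ≤ 1/4 := by nlinarith [sq_nonneg (x-1/2)]
  apply Summable.of_nonneg_of_le
    (fun j => mul_nonneg (mul_nonneg (t_nonneg j) (by positivity)) (pow_nonneg hy0 j))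
    (fun j => ?_) (Real.summable_pow_div_factorial (π^2/4))
  have hA : π^(2*j) * (x*(1-x))^j ≤ (π^2/4)^j := by
    rw [pow_mul, ← mul_pow]
    apply pow_le_pow_left₀ (by positivity)
    nlinarith [sq_nonneg π]
  have hB : (1:ℝ)/(Nat.factorial (2*j)) ≤ 1/(Nat.factorial j) := by
    apply one_div_le_one_div_of_le (by exact_mod_cast Nat.factorial_pos j)
    exact_mod_cast Nat.factorial_le (by omega)
  calc t j * π^(2*j) * (x*(1-x))^j = t j * (π^(2*j) * (x*(1-x))^j) := by ring
    _ ≤ (1/(Nat.factorial (2*j))) * (π^2/4)^j := by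
        apply mul_le_mul (t_le j) hA (by positivity)
        positivity
    _ ≤ (1/(Nat.factorial j)) * (π^2/4)^j := by
        apply mul_le_mul_of_nonneg_right hB (by positivity)
    _ = (π^2/4)^j / (Nat.factorial j) := by ring

/-- For `m ≥ 1` and `0 < x < 1`,
`0 < sin(πx) − Q_m(x) < π^{2m+2}(x(1−x))^{m+1}/(2m+2)! · 1/(1−q_m)`,
where `q_m = (π²/4)/((2m+4)(2m+3))`. -/
theorem sin_sub_Q_bound (m : ℕ) (hm : 1 ≤ m) (x : ℝ) (hx1 : 0 < x) (hx2 : x < 1) :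
    0 < Real.sin (π * x) - Q m x ∧
    Real.sin (π * x) - Q m x <
      π ^ (2 * m + 2) * (x * (1 - x)) ^ (m + 1) / (Nat.factorial (2 * m + 2)) *
        (1 / (1 - π ^ 2 / 4 / ((2 * (m : ℝ) + 4) * (2 * (m : ℝ) + 3)))) := by
  have h0 : 0 ≤ x := hx1.le
  have h1 : x ≤ 1 := hx2.le
  have hy0 : 0 < x*(1-x) := by nlinarith
  have hy4 : x*(1-x) ≤ 1/4 := by nlinarith [sq_nonneg (x-1/2)]
  set u : ℕ → ℝ := fun j => t j * π ^ (2*j) * (x*(1-x))^j with hu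
  have hsu : Summable u := summable_u x h0 h1
  have hid : Real.sin (π*x) = ∑' j, u j := sin_eq x h0 h1
  have hQ : Q m x = ∑ j ∈ Finset.range (m+1), u j := by
    unfold Q
    simp only [hu]
    apply Finset.sum_subset
    · intro j hj
      simp only [Finset.mem_Icc] at hj
      simp only [Finset.mem_range]
      omega
    · intro j hj hnot
      simp only [Finset.mem_range] at hj
      simp only [Finset.mem_Icc] at hnot
      have hj0 : j = 0 := by omega
      subst hj0
      simp [t_zero]
  have htail : Real.sin (π*x) - Q m x = ∑' i, u (i + (m+1)) := by
    rw [hid, hQ, ← Summable.sum_add_tsum_nat_add (m+1) hsu]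
    ring
  have hsu' : Summable (fun i => u (i + (m+1))) :=
    hsu.comp_injective (fun p q h => by omega)
  constructor
  · rw [htail]
    apply Summable.tsum_pos hsu'
      (fun i => mul_nonneg (mul_nonneg (t_nonneg _) (by positivity)) (by positivity)) 0
    show 0 < u (0 + (m+1))
    simp only [hu, zero_add]
    exact mul_pos (mul_pos (t_pos (m+1) (by omega)) (by positivity)) (by positivity)
  · rw [htail]
    set q : ℝ := π^2/4/((2*(m:ℝ)+4)*(2*(m:ℝ)+3)) with hq
    have hq0 : 0 ≤ q := by rw [hq]; positivity
    have hm1 : (1:ℝ) ≤ (m:ℝ) := by exact_mod_cast hm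
    have hq1 : q < 1 := by
      rw [hq, div_lt_one (by positivity)]
      nlinarith [pisq_lt]
    set B : ℝ := π ^ (2*m+2) * (x*(1-x))^(m+1) / (Nat.factorial (2*m+2)) with hB
    have hfact : ∀ i : ℕ, (Nat.factorial (2*m+2) : ℝ) * ((2*(m:ℝ)+3)*(2*(m:ℝ)+4))^i
        ≤ (Nat.factorial (2*(i+m+1)) : ℝ) := by
      intro i
      exact_mod_cast fact_aux m i
    have hterm : ∀ i : ℕ, u (i + (m+1)) ≤ B * q^i := by
      intro i
      have hnum : π^(2*(i+m+1)) * (x*(1-x))^(i+m+1)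
          ≤ π^(2*m+2) * (x*(1-x))^(m+1) * (π^2/4)^i := by
        have he : π^(2*(i+m+1)) * (x*(1-x))^(i+m+1)
            = π^(2*m+2) * (x*(1-x))^(m+1) * (π^2 * (x*(1-x)))^i := by
          have e1 : π^(2*(i+m+1)) = π^(2*m+2) * π^(2*i) := by
            rw [← pow_add]; congr 1; ring
          have e2 : (x*(1-x))^(i+m+1) = (x*(1-x))^(m+1) * (x*(1-x))^i := by
            rw [← pow_add]; congr 1; ring
          have e3 : (π^2*(x*(1-x)))^i = π^(2*i) * (x*(1-x))^i := by
            rw [mul_pow, ← pow_mul]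
          rw [e1, e2, e3]
          ring
        rw [he]
        apply mul_le_mul_of_nonneg_left _ (by positivity)
        apply pow_le_pow_left₀ (by positivity)
        nlinarith [sq_nonneg π]
      calc u (i + (m+1)) = t (i+m+1) * (π^(2*(i+m+1)) * (x*(1-x))^(i+m+1)) := by
            simp only [hu]
            rw [show i + (m+1) = i+m+1 from by ring]
            ring
        _ ≤ (1/(Nat.factorial (2*(i+m+1)))) * (π^(2*(i+m+1)) * (x*(1-x))^(i+m+1)) :=
            mul_le_mul_of_nonneg_right (t_le _) (by positivity)
        _ ≤ (1/(Nat.factorial (2*(i+m+1)))) * (π^(2*m+2) * (x*(1-x))^(m+1) * (π^2/4)^i) :=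
            mul_le_mul_of_nonneg_left hnum (by positivity)
        _ ≤ (1/((Nat.factorial (2*m+2) : ℝ) * ((2*(m:ℝ)+3)*(2*(m:ℝ)+4))^i))
              * (π^(2*m+2) * (x*(1-x))^(m+1) * (π^2/4)^i) := by
            apply mul_le_mul_of_nonneg_right _ (by positivity)
            apply one_div_le_one_div_of_le (by positivity) (hfact i)
        _ = B * q^i := by
            rw [hB, hq, div_pow,
              show ((2*(m:ℝ)+4)*(2*(m:ℝ)+3)) = ((2*(m:ℝ)+3)*(2*(m:ℝ)+4)) from by ring,
              div_pow]
            have hden1 : ((2*(m:ℝ)+3)*(2*(m:ℝ)+4))^i ≠ 0 := by positivity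
            have hden3 : (Nat.factorial (2*m+2) : ℝ) ≠ 0 := by
              exact_mod_cast (Nat.factorial_pos _).ne'
            have h4 : ((4:ℝ))^i ≠ 0 := by positivity
            field_simp
            ring_nf
            rw [mul_assoc, ← mul_pow]
            norm_num
    have hstrict : u (0 + (m+1)) < B * q^0 := by
      simp only [zero_add, pow_zero, mul_one]
      have hlt := t_lt (m+1) (by omega)
      have hP : (0:ℝ) < π^(2*(m+1)) * (x*(1-x))^(m+1) := by positivity
      calc u (m+1) = t (m+1) * (π^(2*(m+1)) * (x*(1-x))^(m+1)) := by
            simp only [hu]; ring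
        _ < (1/(Nat.factorial (2*(m+1)))) * (π^(2*(m+1)) * (x*(1-x))^(m+1)) :=
            mul_lt_mul_of_pos_right hlt hP
        _ = B := by
            rw [hB, show 2*(m+1) = 2*m+2 from by ring]
            ring
    have hsg : Summable (fun i : ℕ => B * q^i) :=
      (summable_geometric_of_lt_one hq0 hq1).mul_left _
    have hlt := Summable.tsum_lt_tsum hterm hstrict hsu' hsg
    rw [tsum_mul_left, tsum_geometric_of_lt_one hq0 hq1] at hlt
    rw [show (1:ℝ)/(1-q) = (1-q)⁻¹ from one_div _]
    exact hlt
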